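/- arXiv:2004.07494 — 2 statements merged into one kernel-verified Lean document; each statement's English description precedes it below -/
import Mathlib

section
/- Let A be strictly positive and let T1, T2, T3, T4 be bounded linear operators on H each admitting an A-adjoint (i.e. for each i there exists S_i with A∘S_i = T_i*∘A). Then w_B([[T1,T2],[T3,T4]]) ≤ max{(1/2)·w_A(T1 + T4 + i(T2 - T3)), (1/2)·w_A(T1 + T4 - i(T2 - T3))} + (1/2)·(w_A(T4 - T1) + w_A(T2 + T3)). -/
open scoped InnerProductSpace
open ContinuousLinearMap

variable {H : Type*} [NormedAddCommGroup H] [InnerProductSpace ℂ H] [CompleteSpace H]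

/-- The `A`-seminorm `‖x‖_A = √⟨Ax,x⟩`. -/
noncomputable def aNorm (A : H →L[ℂ] H) (x : H) : ℝ :=
  Real.sqrt (⟪A x, x⟫_ℂ).re

/-- The `A`-numerical radius `w_A(T) = sup {|⟨ATx,x⟩| : x ∈ H, ‖x‖_A = 1}`. -/
noncomputable def wA (A T : H →L[ℂ] H) : ℝ :=
  sSup {r : ℝ | ∃ x : H, aNorm A x = 1 ∧ r = ‖⟪A (T x), x⟫_ℂ‖}

/-- The `A`-operator seminorm `‖T‖_A = sup {‖Tx‖_A : x ∈ closure (range A), ‖x‖_A = 1}`. -/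
noncomputable def aOpNorm (A T : H →L[ℂ] H) : ℝ :=
  sSup {r : ℝ | ∃ x : H, x ∈ closure (Set.range (⇑A)) ∧ aNorm A x = 1 ∧ r = aNorm A (T x)}

/-- The `B`-numerical radius of the operator matrix `[[T1,T2],[T3,T4]]` acting on `H ⊕ H` by
`(x, y) ↦ (T1 x + T2 y, T3 x + T4 y)`, where `B = [[A,0],[0,A]]`:
`w_B(T) = sup {|⟨BTz,z⟩| : z ∈ H ⊕ H, ‖z‖_B = 1}`. -/
noncomputable def wB (A T1 T2 T3 T4 : H →L[ℂ] H) : ℝ :=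
  sSup {r : ℝ | ∃ x y : H, Real.sqrt ((⟪A x, x⟫_ℂ).re + (⟪A y, y⟫_ℂ).re) = 1 ∧
    r = ‖⟪A (T1 x + T2 y), x⟫_ℂ + ⟪A (T3 x + T4 y), y⟫_ℂ‖}

private lemma pow_limit {x y C : ℝ} (hx : 0 ≤ x) (hy : 0 ≤ y)
    (h : ∀ k : ℕ, x ^ (2^k) ≤ C * y ^ (2^k)) : x ≤ y := by
  by_contra hlt
  push_neg at hlt
  rcases eq_or_lt_of_le hy with hy0 | hy0
  · have h0 := h 0
    simp only [pow_one, ← hy0] at h0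
    simp at h0
    exact absurd (le_antisymm h0 hx) (by nlinarith)
  · have hq : 1 < x / y := (one_lt_div hy0).mpr hlt
    obtain ⟨n, hn⟩ := pow_unbounded_of_one_lt C hq
    have h2 : (x/y)^n ≤ (x/y)^(2^n) := pow_le_pow_right₀ hq.le (Nat.lt_two_pow_self (n := n)).le
    have h3 : (x/y)^(2^n) ≤ C := by
      rw [div_pow, div_le_iff₀ (by positivity)]
      exact h n
    linarith

private lemma innerA {A R : H →L[ℂ] H} (hR : R * R = A)
    (hRsa : ContinuousLinearMap.adjoint R = R) (x y : H) : ⟪A x, y⟫_ℂ = ⟪R x, R y⟫_ℂ := by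
  have h1 : A x = R (R x) := by rw [← hR]; rfl
  have h2 := ContinuousLinearMap.adjoint_inner_left R y (R x)
  rw [hRsa] at h2
  rw [h1, h2]

private lemma keyBound {A R : H →L[ℂ] H} (hR : R * R = A)
    (hRsa : ContinuousLinearMap.adjoint R = R)
    {N : H →L[ℂ] H} (hN : A * N = star N * A) (u : H) :
    ‖⟪A (N u), u⟫_ℂ‖ ≤ ‖N‖ * ‖R u‖ ^ 2 := by
  have hiA : ∀ z w : H, ⟪A z, w⟫_ℂ = ⟪R z, R w⟫_ℂ := innerA hR hRsa
  have hpow : ∀ j : ℕ, A * N ^ j = star (N ^ j) * A := by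
    intro j
    induction j with
    | zero => simp
    | succ k ih =>
        rw [pow_succ, ← mul_assoc, ih, mul_assoc, hN, ← mul_assoc, ← star_mul]
        congr 2
        exact (pow_succ' N k).symm.trans (pow_succ N k)
  set b : ℕ → ℝ := fun j => ‖R ((N ^ j) u)‖ with hb
  have hb0 : ∀ j, 0 ≤ b j := fun j => norm_nonneg _
  have hb00 : b 0 = ‖R u‖ := by simp [hb]
  have hsq : ∀ j : ℕ, b j ^ 2 ≤ b (2 * j) * b 0 := by
    intro j
    have e2 : ⟪A ((N^j) u), (N^j) u⟫_ℂ = ⟪A ((N^(2*j)) u), u⟫_ℂ := by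
      have hmove := (ContinuousLinearMap.adjoint_inner_left (N^j) u (A ((N^j) u))).symm
      rw [hmove]
      congr 1
      have h2 : star (N^j) * A * N^j = A * N^(2*j) := by
        rw [← hpow j, mul_assoc, ← pow_add, two_mul]
      calc (adjoint (N^j)) (A ((N^j) u)) = (star (N^j) * A * N^j) u := by
            rw [star_eq_adjoint]; rfl
        _ = (A * N^(2*j)) u := by rw [h2]
        _ = A ((N^(2*j)) u) := rfl
    have e1 : (b j) ^ 2 = (⟪A ((N^j) u), (N^j) u⟫_ℂ).re := by
      rw [hiA]
      exact (inner_self_eq_norm_sq (𝕜 := ℂ) _).symm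
    rw [e1, e2]
    calc (⟪A ((N^(2*j)) u), u⟫_ℂ).re ≤ ‖⟪A ((N^(2*j)) u), u⟫_ℂ‖ :=
          Complex.re_le_norm _
      _ = ‖⟪R ((N^(2*j)) u), R u⟫_ℂ‖ := by rw [hiA]
      _ ≤ b (2*j) * b 0 := by rw [hb00]; exact norm_inner_le_norm _ _
  have hgrow : ∀ j : ℕ, b j ≤ ‖R‖ * (‖N‖^j * ‖u‖) := by
    intro j
    have h2 : ‖(N^j) u‖ ≤ ‖N^j‖ * ‖u‖ := (N^j).le_opNorm u
    have h3 : ‖N^j‖ ≤ ‖N‖^j := by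
      rcases Nat.eq_zero_or_pos j with hj | hj
      · subst hj; simp only [pow_zero]; exact ContinuousLinearMap.norm_id_le
      · exact norm_pow_le' N hj
    calc b j ≤ ‖R‖ * ‖(N^j) u‖ := R.le_opNorm _
      _ ≤ ‖R‖ * (‖N‖^j * ‖u‖) := mul_le_mul_of_nonneg_left
          (h2.trans (mul_le_mul_of_nonneg_right h3 (norm_nonneg u))) (norm_nonneg R)
  by_cases hz : ‖R u‖ = 0
  · have hru : R u = 0 := norm_eq_zero.mp hz
    have hv : ⟪A (N u), u⟫_ℂ = 0 := by rw [hiA, hru, inner_zero_right]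
    simp [hv, hz]
  · have hbpos : 0 < b 0 := by rw [hb00]; exact lt_of_le_of_ne (norm_nonneg _) (Ne.symm hz)
    have hind : ∀ k : ℕ, b 1 ^ (2^k) ≤ b (2^k) * b 0 ^ (2^k - 1) := by
      intro k
      induction k with
      | zero => simp
      | succ k ih =>
          have h1 : 1 ≤ (2:ℕ)^k := Nat.one_le_two_pow
          have hps : (2:ℕ)^(k+1) = 2 * 2^k := by rw [pow_succ]; ring
          calc b 1 ^ 2^(k+1) = (b 1 ^ 2^k)^2 := by rw [← pow_mul, pow_succ]
            _ ≤ (b (2^k) * b 0 ^ (2^k - 1))^2 :=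
                pow_le_pow_left₀ (pow_nonneg (hb0 1) _) ih 2
            _ = b (2^k)^2 * (b 0 ^ (2^k-1))^2 := by ring
            _ ≤ (b (2*2^k) * b 0) * (b 0 ^ (2^k-1))^2 :=
                mul_le_mul_of_nonneg_right (hsq (2^k)) (by positivity)
            _ = b (2^(k+1)) * b 0 ^ (2^(k+1) - 1) := by
                rw [← hps, ← pow_mul]
                have hexp : (2:ℕ)^(k+1) - 1 = (2^k - 1) * 2 + 1 := by omega
                rw [hexp, pow_add, pow_one]
                ring
    have hfin : b 1 ≤ ‖N‖ * b 0 := by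
      refine pow_limit (hb0 1) (mul_nonneg (norm_nonneg N) (hb0 0)) (C := ‖R‖ * ‖u‖ / b 0) ?_
      intro k
      have h1 : 1 ≤ (2:ℕ)^k := Nat.one_le_two_pow
      calc b 1 ^ 2^k ≤ b (2^k) * b 0 ^ (2^k-1) := hind k
        _ ≤ (‖R‖ * (‖N‖^(2^k) * ‖u‖)) * b 0 ^ (2^k-1) :=
            mul_le_mul_of_nonneg_right (hgrow _) (by positivity)
        _ = ‖R‖ * ‖u‖ / b 0 * (‖N‖ * b 0)^(2^k) := by
            rw [mul_pow]
            have e : b 0 ^ ((2:ℕ)^k) = b 0 ^ (2^k - 1) * b 0 := by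
              rw [← pow_succ]; congr 1; omega
            rw [e]
            field_simp
    calc ‖⟪A (N u), u⟫_ℂ‖ = ‖⟪R (N u), R u⟫_ℂ‖ := by rw [hiA]
      _ ≤ ‖R (N u)‖ * ‖R u‖ := norm_inner_le_norm _ _
      _ = b 1 * b 0 := by simp [hb]
      _ ≤ (‖N‖ * b 0) * b 0 := mul_le_mul_of_nonneg_right hfin (hb0 0)
      _ = ‖N‖ * ‖R u‖ ^ 2 := by rw [hb00]; ring

private lemma aNorm_eq {A R : H →L[ℂ] H} (hR : R * R = A)
    (hRsa : ContinuousLinearMap.adjoint R = R) (x : H) : aNorm A x = ‖R x‖ := by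
  rw [aNorm, innerA hR hRsa,
    show (⟪R x, R x⟫_ℂ).re = ‖R x‖^2 from inner_self_eq_norm_sq (𝕜 := ℂ) (R x)]
  exact Real.sqrt_sq (norm_nonneg _)

private lemma wA_nonneg (A S : H →L[ℂ] H) : 0 ≤ wA A S := by
  apply Real.sSup_nonneg
  rintro r ⟨x, -, rfl⟩
  exact norm_nonneg _

private lemma cBound {A R : H →L[ℂ] H} (hR : R * R = A)
    (hRsa : ContinuousLinearMap.adjoint R = R)
    {S S' : H →L[ℂ] H} (hS : A * S' = star S * A) (u : H) :
    ‖⟪A (S u), u⟫_ℂ‖ ≤ ((‖S + S'‖ + ‖Complex.I • (S - S')‖) / 2) * ‖R u‖ ^ 2 := by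
  have hRst : star R = R := by rw [star_eq_adjoint]; exact hRsa
  have hAsa : star A = A := by rw [← hR, star_mul, hRst]
  have hS2 : star S' * A = A * S := by
    have h := congrArg star hS
    rw [star_mul, star_mul, hAsa, star_star] at h
    exact h
  have hN1 : A * (S + S') = star (S + S') * A := by
    rw [mul_add, star_add, add_mul, ← hS, hS2]
    abel
  have hN2 : A * (Complex.I • (S - S')) = star (Complex.I • (S - S')) * A := by
    rw [mul_smul_comm, star_smul, smul_mul_assoc, mul_sub, star_sub, sub_mul, ← hS, hS2]
    simp only [Complex.star_def, Complex.conj_I]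
    module
  have k1 := keyBound hR hRsa hN1 u
  have k2 := keyBound hR hRsa hN2 u
  have hdec : ⟪A (S u), u⟫_ℂ = (2⁻¹:ℂ) * ⟪A ((S + S') u), u⟫_ℂ
      + (2⁻¹:ℂ) * Complex.I * ⟪A ((Complex.I • (S - S')) u), u⟫_ℂ := by
    simp only [ContinuousLinearMap.add_apply, ContinuousLinearMap.sub_apply,
      ContinuousLinearMap.smul_apply, map_add, map_sub, map_smul, inner_add_left,
      inner_sub_left, inner_smul_left, Complex.conj_I]
    ring_nf
    simp only [Complex.I_sq]
    ring
  rw [hdec]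
  have hn1 : ‖(2⁻¹:ℂ)‖ = 2⁻¹ := by norm_num
  have hn2 : ‖(2⁻¹:ℂ) * Complex.I‖ = 2⁻¹ := by
    rw [norm_mul, Complex.norm_I, hn1]; ring
  calc ‖(2⁻¹:ℂ) * ⟪A ((S + S') u), u⟫_ℂ
        + (2⁻¹:ℂ) * Complex.I * ⟪A ((Complex.I • (S - S')) u), u⟫_ℂ‖
      ≤ ‖(2⁻¹:ℂ) * ⟪A ((S + S') u), u⟫_ℂ‖
        + ‖(2⁻¹:ℂ) * Complex.I * ⟪A ((Complex.I • (S - S')) u), u⟫_ℂ‖ := norm_add_le _ _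
    _ = 2⁻¹ * ‖⟪A ((S + S') u), u⟫_ℂ‖
        + 2⁻¹ * ‖⟪A ((Complex.I • (S - S')) u), u⟫_ℂ‖ := by
          rw [norm_mul, norm_mul, hn2, hn1]
    _ ≤ 2⁻¹ * (‖S + S'‖ * ‖R u‖ ^ 2) + 2⁻¹ * (‖Complex.I • (S - S')‖ * ‖R u‖ ^ 2) :=
          add_le_add (mul_le_mul_of_nonneg_left k1 (by norm_num : (0:ℝ) ≤ 2⁻¹))
            (mul_le_mul_of_nonneg_left k2 (by norm_num : (0:ℝ) ≤ 2⁻¹))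
    _ = ((‖S + S'‖ + ‖Complex.I • (S - S')‖) / 2) * ‖R u‖ ^ 2 := by ring

private lemma wA_pointwise {A R : H →L[ℂ] H} (hR : R * R = A)
    (hRsa : ContinuousLinearMap.adjoint R = R)
    {S : H →L[ℂ] H} (hS : ∃ S' : H →L[ℂ] H, A ∘L S' = ContinuousLinearMap.adjoint S ∘L A)
    (u : H) : ‖⟪A (S u), u⟫_ℂ‖ ≤ wA A S * ‖R u‖ ^ 2 := by
  obtain ⟨S', hS'⟩ := hS
  have hS'' : A * S' = star S * A := by rw [star_eq_adjoint]; exact hS'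
  set c : ℝ := (‖S + S'‖ + ‖Complex.I • (S - S')‖) / 2 with hc
  have hcb : ∀ w : H, ‖⟪A (S w), w⟫_ℂ‖ ≤ c * ‖R w‖ ^ 2 := cBound hR hRsa hS''
  have hBdd : BddAbove {r : ℝ | ∃ x : H, aNorm A x = 1 ∧ r = ‖⟪A (S x), x⟫_ℂ‖} := by
    refine ⟨c, ?_⟩
    rintro ρ ⟨x, hx1, rfl⟩
    have hx2 := hcb x
    rw [aNorm_eq hR hRsa] at hx1
    rw [hx1] at hx2
    simpa using hx2
  by_cases hz : ‖R u‖ = 0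
  · have hru : R u = 0 := norm_eq_zero.mp hz
    have h0 : ⟪A (S u), u⟫_ℂ = 0 := by rw [innerA hR hRsa, hru, inner_zero_right]
    simp [h0, hz]
  · have ht : (0:ℝ) < ‖R u‖ := lt_of_le_of_ne (norm_nonneg _) (Ne.symm hz)
    set t : ℝ := ‖R u‖ with hts
    set u' : H := ((t:ℂ))⁻¹ • u with hu'
    have hRu' : ‖R u'‖ = 1 := by
      rw [hu', map_smul, norm_smul]
      simp only [norm_inv, Complex.norm_real, Real.norm_eq_abs, abs_of_pos ht]
      rw [← hts]
      exact inv_mul_cancel₀ hz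
    have hmem : ‖⟪A (S u'), u'⟫_ℂ‖ ∈
        {r : ℝ | ∃ x : H, aNorm A x = 1 ∧ r = ‖⟪A (S x), x⟫_ℂ‖} :=
      ⟨u', by rw [aNorm_eq hR hRsa]; exact hRu', rfl⟩
    have hval : ‖⟪A (S u'), u'⟫_ℂ‖ = t⁻¹ ^ 2 * ‖⟪A (S u), u⟫_ℂ‖ := by
      rw [hu', map_smul, map_smul, inner_smul_left, inner_smul_right, norm_mul, norm_mul,
        RCLike.norm_conj]
      simp only [norm_inv, Complex.norm_real, Real.norm_eq_abs, abs_of_pos ht]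
      ring
    have hle := le_csSup hBdd hmem
    rw [hval] at hle
    have h2 := mul_le_mul_of_nonneg_right hle (sq_nonneg t)
    have heq : t⁻¹ ^ 2 * ‖⟪A (S u), u⟫_ℂ‖ * t ^ 2 = ‖⟪A (S u), u⟫_ℂ‖ := by
      field_simp
    rw [heq] at h2
    exact h2.trans_eq (by rw [hts, wA])

set_option maxHeartbeats 1000000 in
theorem stmt5 (A T1 T2 T3 T4 : H →L[ℂ] H) (hA : A.IsPositive) (hA' : ∀ x : H, x ≠ 0 → 0 < (⟪A x, x⟫_ℂ).re)
    (h1 : ∃ S : H →L[ℂ] H, A ∘L S = (ContinuousLinearMap.adjoint T1) ∘L A)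
    (h2 : ∃ S : H →L[ℂ] H, A ∘L S = (ContinuousLinearMap.adjoint T2) ∘L A)
    (h3 : ∃ S : H →L[ℂ] H, A ∘L S = (ContinuousLinearMap.adjoint T3) ∘L A)
    (h4 : ∃ S : H →L[ℂ] H, A ∘L S = (ContinuousLinearMap.adjoint T4) ∘L A) :
    wB A T1 T2 T3 T4 ≤
      max ((1 / 2) * wA A (T1 + T4 + Complex.I • (T2 - T3)))
          ((1 / 2) * wA A (T1 + T4 - Complex.I • (T2 - T3))) +
        (1 / 2) * (wA A (T4 - T1) + wA A (T2 + T3)) := by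
  classical
  obtain ⟨S1, hS1'⟩ := h1
  obtain ⟨S2, hS2'⟩ := h2
  obtain ⟨S3, hS3'⟩ := h3
  obtain ⟨S4, hS4'⟩ := h4
  have hs1 : A * S1 = star T1 * A := by rw [star_eq_adjoint]; exact hS1'
  have hs2 : A * S2 = star T2 * A := by rw [star_eq_adjoint]; exact hS2'
  have hs3 : A * S3 = star T3 * A := by rw [star_eq_adjoint]; exact hS3'
  have hs4 : A * S4 = star T4 * A := by rw [star_eq_adjoint]; exact hS4'
  have h0 : (0 : H →L[ℂ] H) ≤ A := (ContinuousLinearMap.nonneg_iff_isPositive A).mpr hA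
  set R : H →L[ℂ] H := CFC.sqrt A with hRdef
  have hR : R * R = A := CFC.sqrt_mul_sqrt_self A h0
  have hRsa : ContinuousLinearMap.adjoint R = R := by
    have hp : (0 : H →L[ℂ] H) ≤ R := CFC.sqrt_nonneg A
    exact (((ContinuousLinearMap.nonneg_iff_isPositive R).mp hp).isSelfAdjoint).adjoint_eq
  -- adjointability of the combinations
  have hC1 : ∃ S' : H →L[ℂ] H,
      A ∘L S' = ContinuousLinearMap.adjoint (T1 + T4 + Complex.I • (T2 - T3)) ∘L A := by
    refine ⟨S1 + S4 + (-Complex.I) • (S2 - S3), ?_⟩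
    rw [← ContinuousLinearMap.star_eq_adjoint]
    show A * (S1 + S4 + (-Complex.I) • (S2 - S3)) = star (T1 + T4 + Complex.I • (T2 - T3)) * A
    simp only [mul_add, add_mul, mul_sub, sub_mul, mul_smul_comm, smul_mul_assoc, star_add,
      star_sub, star_smul, Complex.star_def, Complex.conj_I, hs1, hs2, hs3, hs4]
  have hC2 : ∃ S' : H →L[ℂ] H,
      A ∘L S' = ContinuousLinearMap.adjoint (T1 + T4 - Complex.I • (T2 - T3)) ∘L A := by
    refine ⟨S1 + S4 - (-Complex.I) • (S2 - S3), ?_⟩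
    rw [← ContinuousLinearMap.star_eq_adjoint]
    show A * (S1 + S4 - (-Complex.I) • (S2 - S3)) = star (T1 + T4 - Complex.I • (T2 - T3)) * A
    simp only [mul_add, add_mul, mul_sub, sub_mul, mul_smul_comm, smul_mul_assoc, star_add,
      star_sub, star_smul, Complex.star_def, Complex.conj_I, hs1, hs2, hs3, hs4]
  have hE : ∃ S' : H →L[ℂ] H, A ∘L S' = ContinuousLinearMap.adjoint (T4 - T1) ∘L A := by
    refine ⟨S4 - S1, ?_⟩
    rw [← ContinuousLinearMap.star_eq_adjoint]
    show A * (S4 - S1) = star (T4 - T1) * A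
    simp only [mul_sub, sub_mul, star_sub, hs1, hs4]
  have hF : ∃ S' : H →L[ℂ] H, A ∘L S' = ContinuousLinearMap.adjoint (T2 + T3) ∘L A := by
    refine ⟨S2 + S3, ?_⟩
    rw [← ContinuousLinearMap.star_eq_adjoint]
    show A * (S2 + S3) = star (T2 + T3) * A
    simp only [mul_add, add_mul, star_add, hs2, hs3]
  have n1 := wA_nonneg A (T1 + T4 + Complex.I • (T2 - T3))
  have n2 := wA_nonneg A (T1 + T4 - Complex.I • (T2 - T3))
  have n3 := wA_nonneg A (T4 - T1)
  have n4 := wA_nonneg A (T2 + T3)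
  rw [wB]
  apply Real.sSup_le
  · rintro ρ ⟨x, y, hxy, rfl⟩
    have hx2 : (⟪A x, x⟫_ℂ).re = ‖R x‖^2 := by
      rw [innerA hR hRsa]
      exact inner_self_eq_norm_sq (𝕜 := ℂ) (R x)
    have hy2 : (⟪A y, y⟫_ℂ).re = ‖R y‖^2 := by
      rw [innerA hR hRsa]
      exact inner_self_eq_norm_sq (𝕜 := ℂ) (R y)
    rw [hx2, hy2] at hxy
    have hsum : ‖R x‖^2 + ‖R y‖^2 = 1 := Real.sqrt_eq_one.mp hxy
    set u : H := x + Complex.I • y with hu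
    set v : H := x - Complex.I • y with hv
    set p : H := x + y with hp
    set q : H := x - y with hq
    have hid : ⟪A (T1 x + T2 y), x⟫_ℂ + ⟪A (T3 x + T4 y), y⟫_ℂ =
        (4⁻¹:ℂ) * (⟪A ((T1 + T4 + Complex.I • (T2 - T3)) v), v⟫_ℂ
          + ⟪A ((T1 + T4 - Complex.I • (T2 - T3)) u), u⟫_ℂ)
        + (2⁻¹:ℂ) * (⟪A ((T4 - T1) y), y⟫_ℂ - ⟪A ((T4 - T1) x), x⟫_ℂ)
        + (4⁻¹:ℂ) * (⟪A ((T2 + T3) p), p⟫_ℂ - ⟪A ((T2 + T3) q), q⟫_ℂ) := by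
      rw [hu, hv, hp, hq]
      simp only [ContinuousLinearMap.add_apply, ContinuousLinearMap.sub_apply,
        ContinuousLinearMap.smul_apply, map_add, map_sub, map_smul, inner_add_left,
        inner_add_right, inner_sub_left, inner_sub_right, inner_smul_left, inner_smul_right,
        Complex.conj_I]
      ring_nf
      simp only [Complex.I_sq]
      ring
    have huv : ‖R v‖^2 + ‖R u‖^2 = 2 := by
      have e1 : R u = R x + Complex.I • R y := by rw [hu, map_add, map_smul]
      have e2 : R v = R x - Complex.I • R y := by rw [hv, map_sub, map_smul]
      have hpar := parallelogram_law_with_norm ℂ (R x) (Complex.I • R y)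
      have hIy : ‖Complex.I • R y‖ = ‖R y‖ := by
        rw [norm_smul, Complex.norm_I, one_mul]
      have hIy2 : ‖Complex.I • R y‖^2 = ‖R y‖^2 := by rw [hIy]
      rw [e1, e2]
      nlinarith [hpar, hIy2, hsum]
    have hpq : ‖R p‖^2 + ‖R q‖^2 = 2 := by
      have e1 : R p = R x + R y := by rw [hp, map_add]
      have e2 : R q = R x - R y := by rw [hq, map_sub]
      have hpar := parallelogram_law_with_norm ℂ (R x) (R y)
      rw [e1, e2]
      nlinarith [hpar, hsum]
    have b1 := wA_pointwise hR hRsa hC1 v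
    have b2 := wA_pointwise hR hRsa hC2 u
    have b3x := wA_pointwise hR hRsa hE x
    have b3y := wA_pointwise hR hRsa hE y
    have b4p := wA_pointwise hR hRsa hF p
    have b4q := wA_pointwise hR hRsa hF q
    set w1 := wA A (T1 + T4 + Complex.I • (T2 - T3)) with hw1
    set w2 := wA A (T1 + T4 - Complex.I • (T2 - T3)) with hw2
    set w3 := wA A (T4 - T1) with hw3
    set w4 := wA A (T2 + T3) with hw4
    set m := max ((1/2) * w1) ((1/2) * w2) with hm
    have hm1 : (1/2) * w1 ≤ m := le_max_left _ _
    have hm2 : (1/2) * w2 ≤ m := le_max_right _ _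
    have htri : ‖⟪A (T1 x + T2 y), x⟫_ℂ + ⟪A (T3 x + T4 y), y⟫_ℂ‖ ≤
        4⁻¹ * (‖⟪A ((T1 + T4 + Complex.I • (T2 - T3)) v), v⟫_ℂ‖
          + ‖⟪A ((T1 + T4 - Complex.I • (T2 - T3)) u), u⟫_ℂ‖)
        + 2⁻¹ * (‖⟪A ((T4 - T1) y), y⟫_ℂ‖ + ‖⟪A ((T4 - T1) x), x⟫_ℂ‖)
        + 4⁻¹ * (‖⟪A ((T2 + T3) p), p⟫_ℂ‖ + ‖⟪A ((T2 + T3) q), q⟫_ℂ‖) := by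
      rw [hid]
      have hq4 : ‖(4⁻¹:ℂ)‖ = 4⁻¹ := by norm_num
      have hq2 : ‖(2⁻¹:ℂ)‖ = 2⁻¹ := by norm_num
      refine (norm_add₃_le).trans ?_
      refine add_le_add (add_le_add ?_ ?_) ?_
      · rw [norm_mul, hq4]
        exact mul_le_mul_of_nonneg_left (norm_add_le _ _) (by norm_num)
      · rw [norm_mul, hq2]
        exact mul_le_mul_of_nonneg_left (norm_sub_le _ _) (by norm_num)
      · rw [norm_mul, hq4]
        exact mul_le_mul_of_nonneg_left (norm_sub_le _ _) (by norm_num)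
    have hA1 : ‖⟪A ((T1 + T4 + Complex.I • (T2 - T3)) v), v⟫_ℂ‖
        + ‖⟪A ((T1 + T4 - Complex.I • (T2 - T3)) u), u⟫_ℂ‖ ≤ 4 * m := by
      have e1' : w1 * ‖R v‖^2 ≤ 2*m*‖R v‖^2 :=
        mul_le_mul_of_nonneg_right (by linarith) (sq_nonneg _)
      have e2' : w2 * ‖R u‖^2 ≤ 2*m*‖R u‖^2 :=
        mul_le_mul_of_nonneg_right (by linarith) (sq_nonneg _)
      have e3 : 2*m*‖R v‖^2 + 2*m*‖R u‖^2 = 4*m := by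
        calc 2*m*‖R v‖^2 + 2*m*‖R u‖^2 = 2*m*(‖R v‖^2 + ‖R u‖^2) := by ring
          _ = 2*m*2 := by rw [huv]
          _ = 4*m := by ring
      linarith [b1, b2]
    have hA2 : ‖⟪A ((T4 - T1) y), y⟫_ℂ‖ + ‖⟪A ((T4 - T1) x), x⟫_ℂ‖ ≤ w3 := by
      have e3 : w3*‖R y‖^2 + w3*‖R x‖^2 = w3 := by
        calc w3*‖R y‖^2 + w3*‖R x‖^2 = w3*(‖R x‖^2 + ‖R y‖^2) := by ring
          _ = w3*1 := by rw [hsum]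
          _ = w3 := by ring
      linarith [b3x, b3y]
    have hA3 : ‖⟪A ((T2 + T3) p), p⟫_ℂ‖ + ‖⟪A ((T2 + T3) q), q⟫_ℂ‖ ≤ 2 * w4 := by
      have e3 : w4*‖R p‖^2 + w4*‖R q‖^2 = 2*w4 := by
        calc w4*‖R p‖^2 + w4*‖R q‖^2 = w4*(‖R p‖^2 + ‖R q‖^2) := by ring
          _ = w4*2 := by rw [hpq]
          _ = 2*w4 := by ring
      linarith [b4p, b4q]
    calc ‖⟪A (T1 x + T2 y), x⟫_ℂ + ⟪A (T3 x + T4 y), y⟫_ℂ‖ ≤ _ := htri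
      _ ≤ 4⁻¹ * (4*m) + 2⁻¹ * w3 + 4⁻¹ * (2*w4) := by
          refine add_le_add (add_le_add ?_ ?_) ?_
          · exact mul_le_mul_of_nonneg_left hA1 (by norm_num)
          · exact mul_le_mul_of_nonneg_left hA2 (by norm_num)
          · exact mul_le_mul_of_nonneg_left hA3 (by norm_num)
      _ = m + (1/2) * (w3 + w4) := by ring
  · have hmax : (0:ℝ) ≤ max ((1/2) * wA A (T1 + T4 + Complex.I • (T2 - T3)))
        ((1/2) * wA A (T1 + T4 - Complex.I • (T2 - T3))) :=
      le_trans (by linarith) (le_max_left _ _)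
    have : (0:ℝ) ≤ (1/2) * (wA A (T4 - T1) + wA A (T2 + T3)) := by linarith
    linarith
end

section
/- Let A be strictly positive and let T1, T2, T3, T4 be bounded linear operators on H each admitting an A-adjoint (i.e. for each i there exists S_i with A∘S_i = T_i*∘A). Then w_B([[T1,T2],[T3,T4]]) ≤ max{w_A(T1), w_A(T4)} + (w_A(T2 + T3) + w_A(T2 - T3))/2. -/
open scoped InnerProductSpace
open ContinuousLinearMap

variable {H : Type*} [NormedAddCommGroup H] [InnerProductSpace ℂ H] [CompleteSpace H]

/-- Pre-inner-product core induced by a positive operator. -/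
noncomputable def aCore (A : H →L[ℂ] H) (hA : A.IsPositive) : PreInnerProductSpace.Core ℂ H where
  inner x y := ⟪A x, y⟫_ℂ
  conj_inner_symm x y := by
    have h : ⟪A y, x⟫_ℂ = ⟪y, A x⟫_ℂ := by
      conv_lhs => rw [← hA.isSelfAdjoint.adjoint_eq]
      exact ContinuousLinearMap.adjoint_inner_left A x y
    simp only [h, inner_conj_symm]
  re_inner_nonneg x := hA.2 x
  add_left x y z := by simp [inner_add_left]
  smul_left x y r := by simp [inner_smul_left]; ring

lemma aCS' (A : H →L[ℂ] H) (hA : A.IsPositive) (x y : H) :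
    ‖⟪A x, y⟫_ℂ‖ * ‖⟪A y, x⟫_ℂ‖ ≤ (⟪A x, x⟫_ℂ).re * (⟪A y, y⟫_ℂ).re :=
  @InnerProductSpace.Core.inner_mul_inner_self_le ℂ H _ _ _ (aCore A hA) x y

lemma aNorm_nonneg (A : H →L[ℂ] H) (x : H) : 0 ≤ aNorm A x := Real.sqrt_nonneg _

lemma aNorm_sq (A : H →L[ℂ] H) (hA : A.IsPositive) (x : H) :
    aNorm A x ^ 2 = (⟪A x, x⟫_ℂ).re :=
  Real.sq_sqrt (hA.2 x)

lemma inner_symm_norm (A : H →L[ℂ] H) (hA : A.IsPositive) (x y : H) :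
    ‖⟪A y, x⟫_ℂ‖ = ‖⟪A x, y⟫_ℂ‖ := by
  have h : ⟪A y, x⟫_ℂ = ⟪y, A x⟫_ℂ := by
    conv_lhs => rw [← hA.isSelfAdjoint.adjoint_eq]
    exact ContinuousLinearMap.adjoint_inner_left A x y
  rw [h, ← inner_conj_symm, RCLike.norm_conj]

/-- Cauchy–Schwarz for the `A`-semi-inner-product. -/
lemma aCS (A : H →L[ℂ] H) (hA : A.IsPositive) (x y : H) :
    ‖⟪A x, y⟫_ℂ‖ ≤ aNorm A x * aNorm A y := by
  have h := aCS' A hA x y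
  rw [inner_symm_norm A hA x y] at h
  have h2 : ‖⟪A x, y⟫_ℂ‖ ^ 2 ≤ (aNorm A x * aNorm A y) ^ 2 := by
    rw [mul_pow, aNorm_sq A hA, aNorm_sq A hA]
    nlinarith [h]
  calc ‖⟪A x, y⟫_ℂ‖ = Real.sqrt (‖⟪A x, y⟫_ℂ‖ ^ 2) := (Real.sqrt_sq (norm_nonneg _)).symm
    _ ≤ Real.sqrt ((aNorm A x * aNorm A y) ^ 2) := Real.sqrt_le_sqrt h2
    _ = aNorm A x * aNorm A y := Real.sqrt_sq (mul_nonneg (aNorm_nonneg A x) (aNorm_nonneg A y))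

lemma aI1 (A T S : H →L[ℂ] H) (hA : A.IsPositive) (hS : A ∘L S = (adjoint T) ∘L A) (v : H) :
    aNorm A (T v) ^ 2 ≤ aNorm A (S (T v)) * aNorm A v := by
  have h1 : ⟪(adjoint T) (A (T v)), v⟫_ℂ = ⟪A (T v), T v⟫_ℂ := adjoint_inner_left T v (A (T v))
  have h2 : (adjoint T) (A (T v)) = A (S (T v)) := by
    have := congrArg (fun (B : H →L[ℂ] H) => B (T v)) hS
    simpa using this.symm
  have e : ⟪A (T v), T v⟫_ℂ = ⟪A (S (T v)), v⟫_ℂ := by rw [← h1, h2]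
  rw [aNorm_sq A hA, e]
  calc (⟪A (S (T v)), v⟫_ℂ).re ≤ ‖⟪A (S (T v)), v⟫_ℂ‖ := by
        exact Complex.re_le_norm _
    _ ≤ _ := aCS A hA _ _

lemma aI2 (A T S : H →L[ℂ] H) (hA : A.IsPositive) (hS : A ∘L S = (adjoint T) ∘L A) (v : H) :
    aNorm A (S v) ^ 2 ≤ aNorm A v * aNorm A (T (S v)) := by
  have h1 : ⟪(adjoint T) (A v), S v⟫_ℂ = ⟪A v, T (S v)⟫_ℂ := adjoint_inner_left T (S v) (A v)
  have h2 : A (S v) = (adjoint T) (A v) := by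
    have := congrArg (fun (B : H →L[ℂ] H) => B v) hS
    simpa using this
  have e : ⟪A (S v), S v⟫_ℂ = ⟪A v, T (S v)⟫_ℂ := by rw [h2, h1]
  rw [aNorm_sq A hA, e]
  calc (⟪A v, T (S v)⟫_ℂ).re ≤ ‖⟪A v, T (S v)⟫_ℂ‖ := by
        exact Complex.re_le_norm _
    _ ≤ _ := aCS A hA _ _

noncomputable def altSeq (T S : H →L[ℂ] H) (x : H) : ℕ → H
  | 0 => x
  | (n+1) => (if Even n then T else S) (altSeq T S x n)

lemma aBound (A T S : H →L[ℂ] H) (hA : A.IsPositive)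
    (hS : A ∘L S = (adjoint T) ∘L A) (x : H) (hx : aNorm A x = 1) :
    aNorm A (T x) ≤ max ‖T‖ ‖S‖ + 1 := by
  set L : ℝ := max ‖T‖ ‖S‖ + 1 with hLdef
  have hLpos : 0 < L := by
    have := norm_nonneg T
    have := le_max_left ‖T‖ ‖S‖
    simp only [hLdef]; linarith
  have hTL : ‖T‖ ≤ L := by
    have := le_max_left ‖T‖ ‖S‖; simp only [hLdef]; linarith
  have hSL : ‖S‖ ≤ L := by
    have := le_max_right ‖T‖ ‖S‖; simp only [hLdef]; linarith
  set c : ℕ → ℝ := fun n => aNorm A (altSeq T S x n) with hcdef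
  have hcn : ∀ n, 0 ≤ c n := fun n => aNorm_nonneg _ _
  have hc0 : c 0 = 1 := hx
  have hc1 : c 1 = aNorm A (T x) := by
    simp [hcdef, altSeq]
  have step : ∀ n, c (n+1) ^ 2 ≤ c n * c (n+2) := by
    intro n
    by_cases hn : Even n
    · have hn1 : ¬ Even (n+1) := by simp [Nat.even_add_one, hn]
      have e1 : altSeq T S x (n+1) = T (altSeq T S x n) := by simp [altSeq, hn]
      have e2 : altSeq T S x (n+2) = S (altSeq T S x (n+1)) := by
        show (if Even (n+1) then T else S) (altSeq T S x (n+1)) = _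
        simp [hn1]
      simp only [hcdef, e2, e1]
      rw [mul_comm]
      exact aI1 A T S hA hS _
    · have hn1 : Even (n+1) := Nat.even_add_one.mpr hn
      have e1 : altSeq T S x (n+1) = S (altSeq T S x n) := by simp [altSeq, hn]
      have e2 : altSeq T S x (n+2) = T (altSeq T S x (n+1)) := by
        show (if Even (n+1) then T else S) (altSeq T S x (n+1)) = _
        simp [hn1]
      simp only [hcdef, e2, e1]
      exact aI2 A T S hA hS _
  have hgrow : ∀ n, ‖altSeq T S x n‖ ≤ L ^ n * ‖x‖ := by
    intro n
    induction n with
    | zero => simp [altSeq]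
    | succ n ih =>
      have hXL : ‖(if Even n then T else S)‖ ≤ L := by
        by_cases hn : Even n <;> simp [hn, hTL, hSL]
      calc ‖altSeq T S x (n+1)‖ = ‖(if Even n then T else S) (altSeq T S x n)‖ := rfl
        _ ≤ ‖(if Even n then T else S)‖ * ‖altSeq T S x n‖ := le_opNorm _ _
        _ ≤ L * (L ^ n * ‖x‖) := by
            apply mul_le_mul hXL ih (norm_nonneg _) hLpos.le
        _ = L ^ (n+1) * ‖x‖ := by ring
  have cbound : ∀ n, c n ≤ Real.sqrt ‖A‖ * ‖x‖ * L ^ n := by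
    intro n
    set v := altSeq T S x n with hv
    have h1 : (⟪A v, v⟫_ℂ).re ≤ ‖A‖ * ‖v‖ ^ 2 := by
      calc (⟪A v, v⟫_ℂ).re ≤ ‖⟪A v, v⟫_ℂ‖ := by
            exact Complex.re_le_norm _
        _ ≤ ‖A v‖ * ‖v‖ := norm_inner_le_norm _ _
        _ ≤ (‖A‖ * ‖v‖) * ‖v‖ := by
            apply mul_le_mul_of_nonneg_right (A.le_opNorm v) (norm_nonneg _)
        _ = ‖A‖ * ‖v‖ ^ 2 := by ring
    have h2 : c n ≤ Real.sqrt ‖A‖ * ‖v‖ := by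
      calc c n = Real.sqrt (⟪A v, v⟫_ℂ).re := rfl
        _ ≤ Real.sqrt (‖A‖ * ‖v‖ ^ 2) := Real.sqrt_le_sqrt h1
        _ = Real.sqrt ‖A‖ * ‖v‖ := by
            rw [Real.sqrt_mul (norm_nonneg A), Real.sqrt_sq (norm_nonneg v)]
    calc c n ≤ Real.sqrt ‖A‖ * ‖v‖ := h2
      _ ≤ Real.sqrt ‖A‖ * (L ^ n * ‖x‖) := by
          apply mul_le_mul_of_nonneg_left (hgrow n) (Real.sqrt_nonneg _)
      _ = Real.sqrt ‖A‖ * ‖x‖ * L ^ n := by ring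
  have P : ∀ n, c 1 * c n ≤ c 0 * c (n+1) := by
    intro n
    induction n with
    | zero => rw [mul_comm]
    | succ n ih =>
      rcases eq_or_lt_of_le (hcn n) with h0 | hpos
      · have hz : c (n+1) = 0 := by nlinarith [step n, hcn (n+1), hcn (n+2)]
        rw [hz, mul_zero]
        exact mul_nonneg (hcn 0) (hcn (n+2))
      · have h1 := mul_le_mul_of_nonneg_right ih (hcn (n+1))
        have h2 := mul_le_mul_of_nonneg_left (step n) (hcn 0)
        have h3 : c 1 * c (n+1) * c n ≤ c 0 * c (n+2) * c n := by nlinarith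
        exact le_of_mul_le_mul_right h3 hpos
  have K : ∀ n, c 1 ^ n * c 0 ≤ c 0 ^ n * c n := by
    intro n
    induction n with
    | zero => simp
    | succ n ih =>
      calc c 1 ^ (n+1) * c 0 = c 1 * (c 1 ^ n * c 0) := by ring
        _ ≤ c 1 * (c 0 ^ n * c n) := mul_le_mul_of_nonneg_left ih (hcn 1)
        _ = c 0 ^ n * (c 1 * c n) := by ring
        _ ≤ c 0 ^ n * (c 0 * c (n+1)) := mul_le_mul_of_nonneg_left (P n) (pow_nonneg (hcn 0) n)
        _ = c 0 ^ (n+1) * c (n+1) := by ring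
  rw [← hc1]
  by_contra hcon
  push_neg at hcon
  set M : ℝ := Real.sqrt ‖A‖ * ‖x‖ with hM
  have hq : 1 < c 1 / L := (one_lt_div hLpos).mpr hcon
  have hqn : ∀ n, (c 1 / L) ^ n ≤ M := by
    intro n
    have h5 : c 1 ^ n ≤ c n := by
      have := K n
      rwa [hc0, one_pow, one_mul, mul_one] at this
    have h6 : c 1 ^ n ≤ M * L ^ n := h5.trans (cbound n)
    rw [div_pow, div_le_iff₀ (pow_pos hLpos n)]
    exact h6
  obtain ⟨n, hn⟩ := ((tendsto_pow_atTop_atTop_of_one_lt hq).eventually_gt_atTop M).exists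
  exact absurd (hqn n) (not_le.mpr hn)

lemma wA_bdd (A T : H →L[ℂ] H) (hA : A.IsPositive)
    (h : ∃ S : H →L[ℂ] H, A ∘L S = (adjoint T) ∘L A) :
    BddAbove {r : ℝ | ∃ x : H, aNorm A x = 1 ∧ r = ‖⟪A (T x), x⟫_ℂ‖} := by
  obtain ⟨S, hS⟩ := h
  refine ⟨max ‖T‖ ‖S‖ + 1, ?_⟩
  rintro r ⟨x, hx, rfl⟩
  calc ‖⟪A (T x), x⟫_ℂ‖ ≤ aNorm A (T x) * aNorm A x := aCS A hA _ _
    _ = aNorm A (T x) := by rw [hx, mul_one]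
    _ ≤ _ := aBound A T S hA hS x hx

lemma wA_nonneg' (A T : H →L[ℂ] H) :
    0 ≤ sSup {r : ℝ | ∃ x : H, aNorm A x = 1 ∧ r = ‖⟪A (T x), x⟫_ℂ‖} := by
  apply Real.sSup_nonneg
  rintro r ⟨x, hx, rfl⟩
  exact norm_nonneg _

lemma aNorm_smul_real (A : H →L[ℂ] H) (hA : A.IsPositive) (r : ℝ) (hr : 0 ≤ r) (x : H) :
    aNorm A (((r : ℂ)) • x) = r * aNorm A x := by
  unfold aNorm
  rw [map_smul, inner_smul_left, inner_smul_right, Complex.conj_ofReal, ← mul_assoc,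
    ← Complex.ofReal_mul]
  rw [Complex.re_ofReal_mul, Real.sqrt_mul (mul_nonneg hr hr), Real.sqrt_mul_self hr]

lemma wA_bound (A T : H →L[ℂ] H) (hA : A.IsPositive)
    (hA' : ∀ x : H, x ≠ 0 → 0 < (⟪A x, x⟫_ℂ).re)
    (hb : BddAbove {r : ℝ | ∃ x : H, aNorm A x = 1 ∧ r = ‖⟪A (T x), x⟫_ℂ‖}) (x : H) :
    ‖⟪A (T x), x⟫_ℂ‖ ≤
      sSup {r : ℝ | ∃ x : H, aNorm A x = 1 ∧ r = ‖⟪A (T x), x⟫_ℂ‖} * (⟪A x, x⟫_ℂ).re := by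
  by_cases hx : x = 0
  · simp [hx]
  · have hpos : 0 < (⟪A x, x⟫_ℂ).re := hA' x hx
    have hn : 0 < aNorm A x := Real.sqrt_pos.mpr hpos
    set n : ℝ := aNorm A x with hndef
    have hmem : aNorm A (((n⁻¹ : ℝ) : ℂ) • x) = 1 := by
      rw [aNorm_smul_real A hA _ (inv_nonneg.mpr hn.le), inv_mul_cancel₀ hn.ne']
    have hle : ‖⟪A (T (((n⁻¹ : ℝ) : ℂ) • x)), ((n⁻¹ : ℝ) : ℂ) • x⟫_ℂ‖ ≤
        sSup {r : ℝ | ∃ x : H, aNorm A x = 1 ∧ r = ‖⟪A (T x), x⟫_ℂ‖} :=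
      le_csSup hb ⟨_, hmem, rfl⟩
    have e : ⟪A (T (((n⁻¹ : ℝ) : ℂ) • x)), ((n⁻¹ : ℝ) : ℂ) • x⟫_ℂ =
        ((n⁻¹ * n⁻¹ : ℝ) : ℂ) * ⟪A (T x), x⟫_ℂ := by
      rw [map_smul, map_smul, inner_smul_left, inner_smul_right, Complex.conj_ofReal,
        ← mul_assoc, ← Complex.ofReal_mul]
    rw [e, norm_mul, Complex.norm_real, Real.norm_eq_abs, abs_of_nonneg (by positivity : (0:ℝ) ≤ n⁻¹ * n⁻¹)] at hle
    have hsq : n ^ 2 = (⟪A x, x⟫_ℂ).re := aNorm_sq A hA x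
    have := mul_le_mul_of_nonneg_right hle (sq_nonneg n)
    calc ‖⟪A (T x), x⟫_ℂ‖ = n⁻¹ * n⁻¹ * ‖⟪A (T x), x⟫_ℂ‖ * n ^ 2 := by
          have h9 : n⁻¹ * n⁻¹ * n ^ 2 = 1 := by
            rw [sq]
            field_simp
          nlinarith [h9, norm_nonneg (⟪A (T x), x⟫_ℂ)]
      _ ≤ sSup {r : ℝ | ∃ x : H, aNorm A x = 1 ∧ r = ‖⟪A (T x), x⟫_ℂ‖} * n ^ 2 := this
      _ = _ := by rw [hsq]


set_option maxHeartbeats 2000000 in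
theorem stmt6 (A T1 T2 T3 T4 : H →L[ℂ] H) (hA : A.IsPositive) (hA' : ∀ x : H, x ≠ 0 → 0 < (⟪A x, x⟫_ℂ).re)
    (h1 : ∃ S : H →L[ℂ] H, A ∘L S = (ContinuousLinearMap.adjoint T1) ∘L A)
    (h2 : ∃ S : H →L[ℂ] H, A ∘L S = (ContinuousLinearMap.adjoint T2) ∘L A)
    (h3 : ∃ S : H →L[ℂ] H, A ∘L S = (ContinuousLinearMap.adjoint T3) ∘L A)
    (h4 : ∃ S : H →L[ℂ] H, A ∘L S = (ContinuousLinearMap.adjoint T4) ∘L A) :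
    wB A T1 T2 T3 T4 ≤
      max (wA A T1) (wA A T4) + (wA A (T2 + T3) + wA A (T2 - T3)) / 2 := by
  have hwa : ∀ T : H →L[ℂ] H, wA A T = sSup {r : ℝ | ∃ x : H, aNorm A x = 1 ∧ r = ‖⟪A (T x), x⟫_ℂ‖} := fun _ => rfl
  have hb1 := wA_bdd A T1 hA h1
  have hb4 := wA_bdd A T4 hA h4
  have hS : ∃ S : H →L[ℂ] H, A ∘L S = (adjoint (T2 + T3)) ∘L A := by
    obtain ⟨S2, hS2⟩ := h2; obtain ⟨S3, hS3⟩ := h3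
    exact ⟨S2 + S3, by rw [comp_add, hS2, hS3, map_add, add_comp]⟩
  have hD : ∃ S : H →L[ℂ] H, A ∘L S = (adjoint (T2 - T3)) ∘L A := by
    obtain ⟨S2, hS2⟩ := h2; obtain ⟨S3, hS3⟩ := h3
    exact ⟨S2 - S3, by rw [comp_sub, hS2, hS3, map_sub, sub_comp]⟩
  have hbS := wA_bdd A (T2 + T3) hA hS
  have hbD := wA_bdd A (T2 - T3) hA hD
  have hw1 := wA_nonneg' A T1
  have hw4 := wA_nonneg' A T4
  have hwS := wA_nonneg' A (T2 + T3)
  have hwD := wA_nonneg' A (T2 - T3)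
  rw [hwa T1, hwa T4, hwa (T2 + T3), hwa (T2 - T3)]
  apply Real.sSup_le
  · rintro r ⟨x, y, hxy, rfl⟩
    have hpxy : (⟪A x, x⟫_ℂ).re + (⟪A y, y⟫_ℂ).re = 1 := Real.sqrt_eq_one.mp hxy
    -- diagonal terms
    have hd1 : ‖⟪A (T1 x), x⟫_ℂ‖ ≤
        sSup {r : ℝ | ∃ x : H, aNorm A x = 1 ∧ r = ‖⟪A (T1 x), x⟫_ℂ‖} * (⟪A x, x⟫_ℂ).re :=
      wA_bound A T1 hA hA' hb1 x
    have hd4 : ‖⟪A (T4 y), y⟫_ℂ‖ ≤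
        sSup {r : ℝ | ∃ x : H, aNorm A x = 1 ∧ r = ‖⟪A (T4 x), x⟫_ℂ‖} * (⟪A y, y⟫_ℂ).re :=
      wA_bound A T4 hA hA' hb4 y
    -- cross term identity
    have hid : ⟪A (T2 y), x⟫_ℂ + ⟪A (T3 x), y⟫_ℂ =
        (⟪A ((T2 + T3) (x + y)), x + y⟫_ℂ - ⟪A ((T2 + T3) (x - y)), x - y⟫_ℂ
          + Complex.I * ⟪A ((T2 - T3) (x + Complex.I • y)), x + Complex.I • y⟫_ℂ
          - Complex.I * ⟪A ((T2 - T3) (x - Complex.I • y)), x - Complex.I • y⟫_ℂ) / 4 := by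
      simp only [add_apply, sub_apply, map_add, map_sub, map_smul, inner_add_left,
        inner_add_right, inner_sub_left, inner_sub_right, inner_smul_left, inner_smul_right,
        Complex.conj_I, smul_eq_mul]
      ring_nf
      simp only [Complex.I_sq]
      ring
    -- bounds on the four polarization terms
    have hcS1 := wA_bound A (T2 + T3) hA hA' hbS (x + y)
    have hcS2 := wA_bound A (T2 + T3) hA hA' hbS (x - y)
    have hcD1 := wA_bound A (T2 - T3) hA hA' hbD (x + Complex.I • y)
    have hcD2 := wA_bound A (T2 - T3) hA hA' hbD (x - Complex.I • y)
    -- parallelogram identities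
    have hp1 : (⟪A (x + y), x + y⟫_ℂ).re + (⟪A (x - y), x - y⟫_ℂ).re = 2 := by
      have e : ⟪A (x + y), x + y⟫_ℂ + ⟪A (x - y), x - y⟫_ℂ
          = ((2 : ℝ) : ℂ) * (⟪A x, x⟫_ℂ + ⟪A y, y⟫_ℂ) := by
        simp only [map_add, map_sub, inner_add_left, inner_add_right, inner_sub_left,
          inner_sub_right]
        push_cast
        ring
      have e2 := congrArg Complex.re e
      rw [Complex.add_re, Complex.re_ofReal_mul, Complex.add_re] at e2
      linarith
    have hp2 : (⟪A (x + Complex.I • y), x + Complex.I • y⟫_ℂ).re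
        + (⟪A (x - Complex.I • y), x - Complex.I • y⟫_ℂ).re = 2 := by
      have e : ⟪A (x + Complex.I • y), x + Complex.I • y⟫_ℂ
            + ⟪A (x - Complex.I • y), x - Complex.I • y⟫_ℂ
          = ((2 : ℝ) : ℂ) * (⟪A x, x⟫_ℂ + ⟪A y, y⟫_ℂ) := by
        simp only [map_add, map_sub, map_smul, inner_add_left, inner_add_right, inner_sub_left,
          inner_sub_right, inner_smul_left, inner_smul_right, Complex.conj_I, smul_eq_mul]
        push_cast
        ring_nf
        simp only [Complex.I_sq]
        ring
      have e2 := congrArg Complex.re e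
      rw [Complex.add_re, Complex.re_ofReal_mul, Complex.add_re] at e2
      linarith
    -- bound on cross term
    set wS := sSup {r : ℝ | ∃ x : H, aNorm A x = 1 ∧ r = ‖⟪A ((T2 + T3) x), x⟫_ℂ‖} with hwSdef
    set wD := sSup {r : ℝ | ∃ x : H, aNorm A x = 1 ∧ r = ‖⟪A ((T2 - T3) x), x⟫_ℂ‖} with hwDdef
    have hcross : ‖⟪A (T2 y), x⟫_ℂ + ⟪A (T3 x), y⟫_ℂ‖ ≤ (wS + wD) / 2 := by
      rw [hid]
      have hnum : ‖⟪A ((T2 + T3) (x + y)), x + y⟫_ℂ - ⟪A ((T2 + T3) (x - y)), x - y⟫_ℂ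
          + Complex.I * ⟪A ((T2 - T3) (x + Complex.I • y)), x + Complex.I • y⟫_ℂ
          - Complex.I * ⟪A ((T2 - T3) (x - Complex.I • y)), x - Complex.I • y⟫_ℂ‖
          ≤ ‖⟪A ((T2 + T3) (x + y)), x + y⟫_ℂ‖ + ‖⟪A ((T2 + T3) (x - y)), x - y⟫_ℂ‖
            + ‖⟪A ((T2 - T3) (x + Complex.I • y)), x + Complex.I • y⟫_ℂ‖
            + ‖⟪A ((T2 - T3) (x - Complex.I • y)), x - Complex.I • y⟫_ℂ‖ := by
        calc ‖_ - _ + _ - _‖ ≤ ‖⟪A ((T2 + T3) (x + y)), x + y⟫_ℂ - ⟪A ((T2 + T3) (x - y)), x - y⟫_ℂ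
              + Complex.I * ⟪A ((T2 - T3) (x + Complex.I • y)), x + Complex.I • y⟫_ℂ‖
              + ‖Complex.I * ⟪A ((T2 - T3) (x - Complex.I • y)), x - Complex.I • y⟫_ℂ‖ :=
            norm_sub_le _ _
          _ ≤ (‖⟪A ((T2 + T3) (x + y)), x + y⟫_ℂ - ⟪A ((T2 + T3) (x - y)), x - y⟫_ℂ‖
              + ‖Complex.I * ⟪A ((T2 - T3) (x + Complex.I • y)), x + Complex.I • y⟫_ℂ‖)
              + ‖Complex.I * ⟪A ((T2 - T3) (x - Complex.I • y)), x - Complex.I • y⟫_ℂ‖ := by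
            gcongr
            exact norm_add_le _ _
          _ ≤ _ := by
            rw [norm_mul, norm_mul, Complex.norm_I, one_mul, one_mul]
            have := norm_sub_le (⟪A ((T2 + T3) (x + y)), x + y⟫_ℂ)
              (⟪A ((T2 + T3) (x - y)), x - y⟫_ℂ)
            linarith
      rw [norm_div]
      have h4 : ‖(4 : ℂ)‖ = 4 := by norm_num
      rw [h4]
      have hS2 : wS * ((⟪A (x + y), x + y⟫_ℂ).re + (⟪A (x - y), x - y⟫_ℂ).re) = wS * 2 := by
        rw [hp1]
      have hD2 : wD * ((⟪A (x + Complex.I • y), x + Complex.I • y⟫_ℂ).re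
          + (⟪A (x - Complex.I • y), x - Complex.I • y⟫_ℂ).re) = wD * 2 := by
        rw [hp2]
      have := hnum
      nlinarith [hcS1, hcS2, hcD1, hcD2, hS2, hD2]
    -- assemble
    have hsplit : ⟪A (T1 x + T2 y), x⟫_ℂ + ⟪A (T3 x + T4 y), y⟫_ℂ =
        (⟪A (T1 x), x⟫_ℂ + ⟪A (T4 y), y⟫_ℂ) + (⟪A (T2 y), x⟫_ℂ + ⟪A (T3 x), y⟫_ℂ) := by
      simp only [map_add, inner_add_left]
      ring
    rw [hsplit]
    set w1 := sSup {r : ℝ | ∃ x : H, aNorm A x = 1 ∧ r = ‖⟪A (T1 x), x⟫_ℂ‖}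
    set w4 := sSup {r : ℝ | ∃ x : H, aNorm A x = 1 ∧ r = ‖⟪A (T4 x), x⟫_ℂ‖}
    have hdiag : ‖⟪A (T1 x), x⟫_ℂ + ⟪A (T4 y), y⟫_ℂ‖ ≤ max w1 w4 := by
      have h0 := norm_add_le (⟪A (T1 x), x⟫_ℂ) (⟪A (T4 y), y⟫_ℂ)
      have hx0 : (0:ℝ) ≤ (⟪A x, x⟫_ℂ).re := hA.2 x
      have hy0 : (0:ℝ) ≤ (⟪A y, y⟫_ℂ).re := hA.2 y
      have hm1 : w1 ≤ max w1 w4 := le_max_left _ _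
      have hm4 : w4 ≤ max w1 w4 := le_max_right _ _
      nlinarith [mul_le_mul_of_nonneg_right hm1 hx0, mul_le_mul_of_nonneg_right hm4 hy0]
    calc ‖(⟪A (T1 x), x⟫_ℂ + ⟪A (T4 y), y⟫_ℂ) + (⟪A (T2 y), x⟫_ℂ + ⟪A (T3 x), y⟫_ℂ)‖
        ≤ ‖⟪A (T1 x), x⟫_ℂ + ⟪A (T4 y), y⟫_ℂ‖ + ‖⟪A (T2 y), x⟫_ℂ + ⟪A (T3 x), y⟫_ℂ‖ :=
          norm_add_le _ _
      _ ≤ max w1 w4 + (wS + wD) / 2 := add_le_add hdiag hcross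
  · have h0 : (0:ℝ) ≤ max (sSup {r : ℝ | ∃ x : H, aNorm A x = 1 ∧ r = ‖⟪A (T1 x), x⟫_ℂ‖})
        (sSup {r : ℝ | ∃ x : H, aNorm A x = 1 ∧ r = ‖⟪A (T4 x), x⟫_ℂ‖}) :=
      le_trans hw1 (le_max_left _ _)
    linarith
end
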